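/- Let M be a noncommutative prime Γ-ring. Then the identity map is the unique strong commutativity preserving endomorphism on M: if σ: M → M is an endomorphism satisfying [σ(x),σ(y)]_α = [x,y]_α for all x, y ∈ M and α ∈ Γ, then σ(x) = x for all x ∈ M. -/

import Mathlib

/-- A Γ-ring in the sense of Barnes: additive abelian groups `M` and `Γ` with a
triadditive, associative product `M × Γ × M → M`. -/
structure GammaRing (M : Type*) (Γ : Type*) [AddCommGroup M] [AddCommGroup Γ] where
  tri : M → Γ → M → M
  add_left : ∀ (a b : M) (α : Γ) (c : M), tri (a + b) α c = tri a α c + tri b α c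
  add_mid : ∀ (a : M) (α β : Γ) (b : M), tri a (α + β) b = tri a α b + tri a β b
  add_right : ∀ (a : M) (α : Γ) (b c : M), tri a α (b + c) = tri a α b + tri a α c
  assoc : ∀ (a : M) (α : Γ) (b : M) (β : Γ) (c : M),
    tri (tri a α b) β c = tri a α (tri b β c)

namespace GammaRing

variable {M Γ : Type*} [AddCommGroup M] [AddCommGroup Γ]

/-- The commutator `[a,b]_α = aαb - bαa`. -/
def comm (G : GammaRing M Γ) (a : M) (α : Γ) (b : M) : M :=
  G.tri a α b - G.tri b α a

/-- The center `Z(M)`. -/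
def center (G : GammaRing M Γ) : Set M :=
  {a | ∀ (b : M) (α : Γ), G.tri a α b = G.tri b α a}

/-- A left derivation: additive with `δ(xαy) = xαδ(y) + yαδ(x)`. -/
def IsLeftDerivation (G : GammaRing M Γ) (δ : M → M) : Prop :=
  (∀ x y : M, δ (x + y) = δ x + δ y) ∧
  ∀ (x : M) (α : Γ) (y : M), δ (G.tri x α y) = G.tri x α (δ y) + G.tri y α (δ x)

/-- A derivation: additive with `μ(xαy) = μ(x)αy + xαμ(y)`. -/
def IsDerivation (G : GammaRing M Γ) (μ : M → M) : Prop :=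
  (∀ x y : M, μ (x + y) = μ x + μ y) ∧
  ∀ (x : M) (α : Γ) (y : M), μ (G.tri x α y) = G.tri (μ x) α y + G.tri x α (μ y)

/-- An endomorphism: additive with `σ(xαy) = σ(x)ασ(y)`. -/
def IsEndomorphism (G : GammaRing M Γ) (σ : M → M) : Prop :=
  (∀ x y : M, σ (x + y) = σ x + σ y) ∧
  ∀ (x : M) (α : Γ) (y : M), σ (G.tri x α y) = G.tri (σ x) α (σ y)

/-- Semiprime: `aΓMΓa = 0` implies `a = 0`. -/
def IsSemiprime (G : GammaRing M Γ) : Prop :=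
  ∀ a : M, (∀ (α : Γ) (m : M) (β : Γ), G.tri (G.tri a α m) β a = 0) → a = 0

/-- Prime: `aΓMΓb = 0` implies `a = 0` or `b = 0`. -/
def IsPrime (G : GammaRing M Γ) : Prop :=
  ∀ a b : M, (∀ (α : Γ) (m : M) (β : Γ), G.tri (G.tri a α m) β b = 0) → a = 0 ∨ b = 0

/-- Strong commutativity preserving: `[f(x),f(y)]_α = [x,y]_α`. -/
def IsSCP (G : GammaRing M Γ) (f : M → M) : Prop :=
  ∀ (x : M) (α : Γ) (y : M), G.comm (f x) α (f y) = G.comm x α y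

end GammaRing

namespace GammaRing

variable {M Γ : Type*} [AddCommGroup M] [AddCommGroup Γ]

lemma tri_zero_left (G : GammaRing M Γ) (α : Γ) (c : M) : G.tri 0 α c = 0 := by
  have h := G.add_left 0 0 α c
  rw [add_zero] at h
  exact right_eq_add.mp h

lemma tri_zero_right (G : GammaRing M Γ) (a : M) (α : Γ) : G.tri a α 0 = 0 := by
  have h := G.add_right a α 0 0
  rw [add_zero] at h
  exact right_eq_add.mp h

lemma tri_sub_left (G : GammaRing M Γ) (a b : M) (α : Γ) (c : M) :
    G.tri (a - b) α c = G.tri a α c - G.tri b α c := by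
  have h := G.add_left (a - b) b α c
  rw [sub_add_cancel] at h
  exact eq_sub_of_add_eq h.symm

lemma tri_sub_right (G : GammaRing M Γ) (a : M) (α : Γ) (b c : M) :
    G.tri a α (b - c) = G.tri a α b - G.tri a α c := by
  have h := G.add_right a α (b - c) c
  rw [sub_add_cancel] at h
  exact eq_sub_of_add_eq h.symm

lemma endo_sub (G : GammaRing M Γ) {σ : M → M} (hσ : G.IsEndomorphism σ) (a b : M) :
    σ (a - b) = σ a - σ b := by
  have h := hσ.1 (a - b) b
  rw [sub_add_cancel] at h
  exact eq_sub_of_add_eq h.symm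

lemma fix_comm (G : GammaRing M Γ) {σ : M → M} (hσ : G.IsEndomorphism σ)
    (hscp : G.IsSCP σ) (u : M) (γ : Γ) (v : M) :
    σ (G.comm u γ v) = G.comm u γ v := by
  have h : σ (G.comm u γ v) = G.comm (σ u) γ (σ v) := by
    simp only [GammaRing.comm]
    rw [endo_sub G hσ, hσ.2, hσ.2]
  rw [h, hscp]

/-- The master identity `(*m)`. -/
lemma mstar (G : GammaRing M Γ) {σ : M → M} (hσ : G.IsEndomorphism σ)
    (hscp : G.IsSCP σ) (x y z : M) (α β : Γ) :
    G.tri (G.comm x α y) β (σ z - z) + G.tri (σ y - y) β (G.comm x α z)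
      + (G.tri (G.tri (σ y) α (σ x)) β (σ z) - G.tri (G.tri y α x) β z)
      - (G.tri (G.tri (σ y) β (σ x)) α (σ z) - G.tri (G.tri y β x) α z) = 0 := by
  have h1 : G.comm (σ x) α (σ y) = G.comm x α y := hscp x α y
  have h2 : G.comm (σ x) α (σ z) = G.comm x α z := hscp x α z
  have h3 : G.comm (σ x) α (G.tri (σ y) β (σ z)) = G.comm x α (G.tri y β z) := by
    have h := hscp x α (G.tri y β z)
    rwa [hσ.2] at h
  have key : G.tri (G.comm x α y) β (σ z - z) + G.tri (σ y - y) β (G.comm x α z)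
      + (G.tri (G.tri (σ y) α (σ x)) β (σ z) - G.tri (G.tri y α x) β z)
      - (G.tri (G.tri (σ y) β (σ x)) α (σ z) - G.tri (G.tri y β x) α z)
      = G.tri (G.comm x α y - G.comm (σ x) α (σ y)) β (σ z)
        - (G.comm x α (G.tri y β z) - G.comm (σ x) α (G.tri (σ y) β (σ z)))
        + G.tri (σ y) β (G.comm x α z - G.comm (σ x) α (σ z)) := by
    simp only [GammaRing.comm, tri_sub_left, tri_sub_right, G.assoc]
    abel
  rw [key, h1, h2, h3]
  simp [tri_zero_left, tri_zero_right]

/-- masterA : d(y) kills the BIG-defect. -/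
lemma masterA (G : GammaRing M Γ) {σ : M → M} (hσ : G.IsEndomorphism σ)
    (hscp : G.IsSCP σ) {k : M} (hk : σ k = k) (y m x : M) (β α γ : Γ) :
    G.tri (σ y - y) β (G.tri (G.tri m α x) γ k - G.tri (G.tri m γ k) α x) = 0 := by
  have h1 := mstar G hσ hscp x y (G.tri m γ k) α β
  have hσmk : σ (G.tri m γ k) = G.tri (σ m) γ k := by rw [hσ.2, hk]
  rw [hσmk] at h1
  have h2 := mstar G hσ hscp x y m α β
  have key : G.tri (σ y - y) β (G.tri (G.tri m α x) γ k - G.tri (G.tri m γ k) α x)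
      = (G.tri (G.comm x α y) β (G.tri (σ m) γ k - G.tri m γ k)
          + G.tri (σ y - y) β (G.comm x α (G.tri m γ k))
          + (G.tri (G.tri (σ y) α (σ x)) β (G.tri (σ m) γ k)
              - G.tri (G.tri y α x) β (G.tri m γ k))
          - (G.tri (G.tri (σ y) β (σ x)) α (G.tri (σ m) γ k)
              - G.tri (G.tri y β x) α (G.tri m γ k)))
        - G.tri (G.tri (G.comm x α y) β (σ m - m) + G.tri (σ y - y) β (G.comm x α m)
            + (G.tri (G.tri (σ y) α (σ x)) β (σ m) - G.tri (G.tri y α x) β m)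
            - (G.tri (G.tri (σ y) β (σ x)) α (σ m) - G.tri (G.tri y β x) α m)) γ k := by
    simp only [GammaRing.comm, tri_sub_left, tri_sub_right, G.add_left, G.add_right, G.assoc]
    abel
  rw [key, h1, h2, tri_zero_left, sub_zero]

/-- seedB : the BIG'-defect kills d(z). -/
lemma seedB (G : GammaRing M Γ) {σ : M → M} (hσ : G.IsEndomorphism σ)
    (hscp : G.IsSCP σ) {k : M} (hk : σ k = k) (x m z : M) (α γ β : Γ) :
    G.tri (G.tri x α (G.tri k γ m) - G.tri k γ (G.tri x α m)) β (σ z - z) = 0 := by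
  have h1 := mstar G hσ hscp x (G.tri k γ m) z α β
  have hσkm : σ (G.tri k γ m) = G.tri k γ (σ m) := by rw [hσ.2, hk]
  rw [hσkm] at h1
  have h2 := mstar G hσ hscp x m z α β
  have key : G.tri (G.tri x α (G.tri k γ m) - G.tri k γ (G.tri x α m)) β (σ z - z)
      = (G.tri (G.comm x α (G.tri k γ m)) β (σ z - z)
          + G.tri (G.tri k γ (σ m) - G.tri k γ m) β (G.comm x α z)
          + (G.tri (G.tri (G.tri k γ (σ m)) α (σ x)) β (σ z)
              - G.tri (G.tri (G.tri k γ m) α x) β z)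
          - (G.tri (G.tri (G.tri k γ (σ m)) β (σ x)) α (σ z)
              - G.tri (G.tri (G.tri k γ m) β x) α z))
        - G.tri k γ (G.tri (G.comm x α m) β (σ z - z) + G.tri (σ m - m) β (G.comm x α z)
            + (G.tri (G.tri (σ m) α (σ x)) β (σ z) - G.tri (G.tri m α x) β z)
            - (G.tri (G.tri (σ m) β (σ x)) α (σ z) - G.tri (G.tri m β x) α z)) := by
    simp only [GammaRing.comm, tri_sub_left, tri_sub_right, G.add_left, G.add_right, G.assoc]
    abel
  rw [key, h1, h2, tri_zero_right, sub_zero]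

/-- The ZC2 identity, valid whenever all commutators are central. -/
lemma zc2 (G : GammaRing M Γ)
    (hcen : ∀ (u : M) (γ' : Γ) (v x : M) (δ : Γ),
      G.tri x δ (G.comm u γ' v) = G.tri (G.comm u γ' v) δ x)
    (u v m w : M) (γ' δ : Γ) :
    G.tri (G.comm u γ' v) γ' (G.tri m δ w) + G.tri (G.comm u γ' m) δ (G.tri v γ' w)
      = G.tri (G.comm u γ' v) δ (G.tri w γ' m) + G.tri (G.comm u γ' m) γ' (G.tri w δ v) := by
  have hdec : G.comm u γ' (G.tri v γ' m)
      = G.tri (G.comm u γ' v) γ' m + G.tri v γ' (G.comm u γ' m) := by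
    simp only [GammaRing.comm, tri_sub_left, tri_sub_right, G.assoc]
    abel
  have hL : G.tri (G.comm u γ' (G.tri v γ' m)) δ w
      = G.tri (G.comm u γ' v) γ' (G.tri m δ w) + G.tri (G.comm u γ' m) δ (G.tri v γ' w) := by
    calc G.tri (G.comm u γ' (G.tri v γ' m)) δ w
        = G.tri (G.tri (G.comm u γ' v) γ' m) δ w
            + G.tri (G.tri v γ' (G.comm u γ' m)) δ w := by rw [hdec, G.add_left]
      _ = G.tri (G.comm u γ' v) γ' (G.tri m δ w)
            + G.tri v γ' (G.tri (G.comm u γ' m) δ w) := by rw [G.assoc, G.assoc]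
      _ = G.tri (G.comm u γ' v) γ' (G.tri m δ w)
            + G.tri v γ' (G.tri w δ (G.comm u γ' m)) := by rw [← hcen u γ' m w δ]
      _ = G.tri (G.comm u γ' v) γ' (G.tri m δ w)
            + G.tri (G.tri v γ' w) δ (G.comm u γ' m) := by
              rw [← G.assoc v γ' w δ (G.comm u γ' m)]
      _ = G.tri (G.comm u γ' v) γ' (G.tri m δ w)
            + G.tri (G.comm u γ' m) δ (G.tri v γ' w) := by rw [hcen u γ' m (G.tri v γ' w) δ]
  have hR : G.tri w δ (G.comm u γ' (G.tri v γ' m))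
      = G.tri (G.comm u γ' v) δ (G.tri w γ' m) + G.tri (G.comm u γ' m) γ' (G.tri w δ v) := by
    calc G.tri w δ (G.comm u γ' (G.tri v γ' m))
        = G.tri w δ (G.tri (G.comm u γ' v) γ' m)
            + G.tri w δ (G.tri v γ' (G.comm u γ' m)) := by rw [hdec, G.add_right]
      _ = G.tri (G.tri w δ (G.comm u γ' v)) γ' m
            + G.tri (G.tri w δ v) γ' (G.comm u γ' m) := by rw [← G.assoc, ← G.assoc]
      _ = G.tri (G.tri (G.comm u γ' v) δ w) γ' m
            + G.tri (G.comm u γ' m) γ' (G.tri w δ v) := by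
              rw [hcen u γ' v w δ, hcen u γ' m (G.tri w δ v) γ']
      _ = G.tri (G.comm u γ' v) δ (G.tri w γ' m)
            + G.tri (G.comm u γ' m) γ' (G.tri w δ v) := by rw [G.assoc]
  calc G.tri (G.comm u γ' v) γ' (G.tri m δ w) + G.tri (G.comm u γ' m) δ (G.tri v γ' w)
      = G.tri (G.comm u γ' (G.tri v γ' m)) δ w := hL.symm
    _ = G.tri w δ (G.comm u γ' (G.tri v γ' m)) := (hcen u γ' (G.tri v γ' m) w δ).symm
    _ = G.tri (G.comm u γ' v) δ (G.tri w γ' m) + G.tri (G.comm u γ' m) γ' (G.tri w δ v) := hR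

end GammaRing


/-- On a noncommutative prime Γ-ring, the identity is the unique scp
endomorphism. -/
theorem noncommutative_prime_scp_endomorphism_eq_id {M Γ : Type*}
    [AddCommGroup M] [AddCommGroup Γ] (G : GammaRing M Γ) (hp : G.IsPrime)
    (hnc : ∃ (a b : M) (α : Γ), G.tri a α b ≠ G.tri b α a)
    (σ : M → M) (hσ : G.IsEndomorphism σ) (hscp : G.IsSCP σ) :
    ∀ x : M, σ x = x := by
  intro x0
  by_contra hx0
  have hD : σ x0 - x0 ≠ 0 := sub_ne_zero.mpr hx0
  -- left kill lemma
  have killL : ∀ e : M, (∀ (γ : Γ) (w : M), G.tri e γ (σ w - w) = 0) → e = 0 := by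
    intro e he
    refine (hp e (σ x0 - x0) ?_).resolve_right hD
    intro α w β
    rw [G.assoc]
    have h1 : G.tri w β (σ x0 - x0)
        = (σ (G.tri w β x0) - G.tri w β x0) - G.tri (σ w - w) β x0
          - G.tri (σ w - w) β (σ x0 - x0) := by
      rw [hσ.2]
      simp only [GammaRing.tri_sub_left, GammaRing.tri_sub_right]
      abel
    have e1 : G.tri e α (σ (G.tri w β x0) - G.tri w β x0) = 0 := he α (G.tri w β x0)
    have e2 : G.tri e α (G.tri (σ w - w) β x0) = 0 := by
      rw [← G.assoc, he α w, GammaRing.tri_zero_left]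
    have e3 : G.tri e α (G.tri (σ w - w) β (σ x0 - x0)) = 0 := by
      rw [← G.assoc, he α w, GammaRing.tri_zero_left]
    rw [h1, GammaRing.tri_sub_right, GammaRing.tri_sub_right, e1, e2, e3]
    simp
  -- right kill lemma
  have killR : ∀ e : M, (∀ (γ : Γ) (w : M), G.tri (σ w - w) γ e = 0) → e = 0 := by
    intro e he
    refine (hp (σ x0 - x0) e ?_).resolve_left hD
    intro α w β
    have h1 : G.tri (σ x0 - x0) α w
        = (σ (G.tri x0 α w) - G.tri x0 α w) - G.tri x0 α (σ w - w)
          - G.tri (σ x0 - x0) α (σ w - w) := by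
      rw [hσ.2]
      simp only [GammaRing.tri_sub_left, GammaRing.tri_sub_right]
      abel
    have e1 : G.tri (σ (G.tri x0 α w) - G.tri x0 α w) β e = 0 := he β (G.tri x0 α w)
    have e2 : G.tri (G.tri x0 α (σ w - w)) β e = 0 := by
      rw [G.assoc, he β w, GammaRing.tri_zero_right]
    have e3 : G.tri (G.tri (σ x0 - x0) α (σ w - w)) β e = 0 := by
      rw [G.assoc, he β w, GammaRing.tri_zero_right]
    rw [h1, GammaRing.tri_sub_left, GammaRing.tri_sub_left, e1, e2, e3]
    simp
  -- commutators are fixed by σ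
  have fixcomm : ∀ (u : M) (γ : Γ) (v : M), σ (G.comm u γ v) = G.comm u γ v :=
    fun u γ v => GammaRing.fix_comm G hσ hscp u γ v
  -- BIG swap rule
  have big : ∀ k : M, σ k = k → ∀ (m x : M) (α γ : Γ),
      G.tri (G.tri m α x) γ k = G.tri (G.tri m γ k) α x := by
    intro k hk m x α γ
    exact sub_eq_zero.mp
      (killR _ (fun β y => GammaRing.masterA G hσ hscp hk y m x β α γ))
  -- BIG' swap rule
  have big' : ∀ k : M, σ k = k → ∀ (x m : M) (α γ : Γ),
      G.tri x α (G.tri k γ m) = G.tri k γ (G.tri x α m) := by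
    intro k hk x m α γ
    exact sub_eq_zero.mp
      (killL _ (fun β z => GammaRing.seedB G hσ hscp hk x m z α γ β))
  -- every σ-fixed element is central
  have central : ∀ k : M, σ k = k → ∀ (x : M) (δ : Γ), G.tri x δ k = G.tri k δ x := by
    intro k hk x δ
    by_cases hk0 : k = 0
    · subst hk0
      rw [GammaRing.tri_zero_right, GammaRing.tri_zero_left]
    · have key1 : ∀ (x' : M) (γ β : Γ), G.tri (G.comm x' γ k) β k = 0 := by
        intro x' γ β
        have c1 : G.tri (G.tri x' γ k) β k = G.tri (G.tri k β k) γ x' := by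
          calc G.tri (G.tri x' γ k) β k = G.tri x' γ (G.tri k β k) := G.assoc x' γ k β k
            _ = G.tri k β (G.tri x' γ k) := big' k hk x' k γ β
            _ = G.tri (G.tri k β x') γ k := (G.assoc k β x' γ k).symm
            _ = G.tri (G.tri k γ k) β x' := big k hk k x' β γ
            _ = G.tri k γ (G.tri k β x') := G.assoc k γ k β x'
            _ = G.tri k β (G.tri k γ x') := big' k hk k x' γ β
            _ = G.tri (G.tri k β k) γ x' := (G.assoc k β k γ x').symm
        have c2 : G.tri (G.tri k γ x') β k = G.tri (G.tri k β k) γ x' := big k hk k x' γ β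
        show G.tri (G.tri x' γ k - G.tri k γ x') β k = 0
        rw [GammaRing.tri_sub_left, c1, c2, sub_self]
      have key2 : ∀ (α : Γ) (m : M) (β : Γ),
          G.tri (G.tri (G.comm x δ k) α m) β k = 0 := by
        intro α m β
        rw [big k hk (G.comm x δ k) m α β, key1, GammaRing.tri_zero_left]
      rcases hp (G.comm x δ k) k key2 with h | h
      · exact sub_eq_zero.mp (show G.tri x δ k - G.tri k δ x = 0 from h)
      · exact absurd h hk0
  have hcen : ∀ (u : M) (γ' : Γ) (v x : M) (δ : Γ),
      G.tri x δ (G.comm u γ' v) = G.tri (G.comm u γ' v) δ x :=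
    fun u γ' v x δ => central _ (fixcomm u γ' v) x δ
  -- the noncommutativity witness
  obtain ⟨p, q, γ₀, hpq⟩ := hnc
  have hc0 : G.comm p γ₀ q ≠ 0 := by
    intro h
    exact hpq (sub_eq_zero.mp (show G.tri p γ₀ q - G.tri q γ₀ p = 0 from h))
  -- c₀ γ₀ c₀ = 0
  have s0 : G.tri (G.comm p γ₀ q) γ₀ (G.comm p γ₀ q) = 0 := by
    have h := GammaRing.zc2 G hcen p q p q γ₀ γ₀
    have hz : G.comm p γ₀ p = 0 := sub_self _
    rw [hz] at h
    simp only [GammaRing.tri_zero_left, add_zero] at h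
    show G.tri (G.comm p γ₀ q) γ₀ (G.tri p γ₀ q - G.tri q γ₀ p) = 0
    rw [GammaRing.tri_sub_right, h, sub_self]
  -- E1 : c₀ γ₀ [q,p]_γ = c₀ γ c₀
  have e1 : ∀ γ : Γ, G.tri (G.comm p γ₀ q) γ₀ (G.comm q γ p)
      = G.tri (G.comm p γ₀ q) γ (G.comm p γ₀ q) := by
    intro γ
    have h := GammaRing.zc2 G hcen p q q p γ₀ γ
    show G.tri (G.comm p γ₀ q) γ₀ (G.tri q γ p - G.tri p γ q)
        = G.tri (G.comm p γ₀ q) γ (G.tri p γ₀ q - G.tri q γ₀ p)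
    rw [GammaRing.tri_sub_right, GammaRing.tri_sub_right, sub_eq_sub_iff_add_eq_add]
    exact h
  -- σ fixes c₀ and the s-elements
  have fixc0 : σ (G.comm p γ₀ q) = G.comm p γ₀ q := fixcomm p γ₀ q
  have fixs : ∀ γ : Γ, σ (G.tri (G.comm p γ₀ q) γ (G.comm p γ₀ q))
      = G.tri (G.comm p γ₀ q) γ (G.comm p γ₀ q) := by
    intro γ
    rw [hσ.2, fixc0]
  have scentral : ∀ (γ : Γ) (x : M) (δ : Γ),
      G.tri x δ (G.tri (G.comm p γ₀ q) γ (G.comm p γ₀ q))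
        = G.tri (G.tri (G.comm p γ₀ q) γ (G.comm p γ₀ q)) δ x :=
    fun γ => central _ (fixs γ)
  have hs : ∀ γ : Γ, G.tri (G.comm p γ₀ q) γ₀
      (G.tri (G.comm p γ₀ q) γ (G.comm p γ₀ q)) = 0 := by
    intro γ
    rw [← G.assoc, s0, GammaRing.tri_zero_left]
  -- all s-elements vanish
  have szero : ∀ γ : Γ, G.tri (G.comm p γ₀ q) γ (G.comm p γ₀ q) = 0 := by
    intro γ
    have hyp : ∀ (α : Γ) (m' : M) (β : Γ),
        G.tri (G.tri (G.tri (G.comm p γ₀ q) γ₀ (G.comm q γ p)) α m') β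
          (G.tri (G.comm p γ₀ q) γ (G.comm p γ₀ q)) = 0 := by
      intro α m' β
      rw [G.assoc (G.comm p γ₀ q) γ₀ (G.comm q γ p) α m',
        G.assoc (G.comm p γ₀ q) γ₀ (G.tri (G.comm q γ p) α m') β
          (G.tri (G.comm p γ₀ q) γ (G.comm p γ₀ q)),
        scentral γ (G.tri (G.comm q γ p) α m') β,
        ← G.assoc, hs γ, GammaRing.tri_zero_left]
    rcases hp _ _ hyp with h | h
    · rw [e1 γ] at h
      exact h
    · exact h
  -- final contradiction
  have hyp2 : ∀ (α : Γ) (m : M) (β : Γ),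
      G.tri (G.tri (G.comm p γ₀ q) α m) β (G.comm p γ₀ q) = 0 := by
    intro α m β
    rw [G.assoc, central _ fixc0 m β, ← G.assoc, szero α, GammaRing.tri_zero_left]
  rcases hp _ _ hyp2 with h | h <;> exact hc0 h
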